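/- For any n-variable Boolean function f, the algebraic immunity AI(f) is at most ⌈n/2⌉. -/

import Mathlib

abbrev BF (n : ℕ) := (Fin n → ZMod 2) → ZMod 2

/-- Hamming weight of a vector in `F₂ⁿ`. -/
def wtv {n : ℕ} (x : Fin n → ZMod 2) : ℕ :=
  (Finset.univ.filter fun i => x i = 1).card

/-- ANF coefficient `a_α = ⊕_{z ≤ α} f(z)`. -/
def anf {n : ℕ} (f : BF n) (α : Fin n → ZMod 2) : ZMod 2 :=
  ∑ z ∈ Finset.univ.filter (fun z : Fin n → ZMod 2 => ∀ i, z i = 1 → α i = 1), f z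

/-- Algebraic degree: the maximum weight of `α` with nonzero ANF coefficient
(0 for the zero function). -/
def degBF {n : ℕ} (f : BF n) : ℕ :=
  (Finset.univ.filter fun α => anf f α ≠ 0).sup wtv

namespace AIaux
open Finset

variable {n : ℕ}

lemma zmod2_cases (a : ZMod 2) : a = 0 ∨ a = 1 := by revert a; decide

lemma zmod2_add_self (a : ZMod 2) : a + a = 0 := by revert a; decide

lemma zmod2_add_one_ne (a : ZMod 2) : a + 1 ≠ a := by revert a; decide

lemma zmod2_aoo (a : ZMod 2) : a + 1 + 1 = a := by revert a; decide

def mon {n : ℕ} (β : Fin n → ZMod 2) : BF n :=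
  fun x => ∏ i ∈ Finset.univ.filter (fun i => β i = 1), x i

lemma mon_eq_one {β z : Fin n → ZMod 2} (h : ∀ i, β i = 1 → z i = 1) : mon β z = 1 :=
  Finset.prod_eq_one fun i hi => h i (by simpa using hi)

lemma mon_eq_zero {β z : Fin n → ZMod 2} (i : Fin n) (hβ : β i = 1) (hz : z i ≠ 1) :
    mon β z = 0 := by
  apply Finset.prod_eq_zero (i := i) (by simpa using hβ)
  rcases zmod2_cases (z i) with h | h
  · exact h
  · exact absurd h hz

lemma fun_ext_of {β z : Fin n → ZMod 2} (h1 : ∀ i, z i = 1 → β i = 1)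
    (h2 : ∀ i, β i = 1 → z i = 1) : z = β := by
  funext i
  rcases zmod2_cases (z i) with h | h <;> rcases zmod2_cases (β i) with h' | h'
  · rw [h, h']
  · rw [h2 i h'] at h; exact absurd h (by decide)
  · rw [h1 i h] at h'; exact absurd h' (by decide)
  · rw [h, h']

lemma anf_mon (β α : Fin n → ZMod 2) : anf (mon β) α = if β = α then 1 else 0 := by
  unfold anf
  by_cases hβα : β = α
  · subst hβα
    rw [if_pos rfl, Finset.sum_eq_single β]
    · exact mon_eq_one fun _ h => h
    · intro z hz hne
      simp only [mem_filter, mem_univ, true_and] at hz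
      by_contra hmon
      have hforall : ∀ i, β i = 1 → z i = 1 := by
        intro i hi
        by_contra hzi
        exact hmon (mon_eq_zero i hi hzi)
      exact hne (fun_ext_of hz hforall)
    · intro hmem
      exact absurd (by simp : β ∈ Finset.univ.filter
        (fun z : Fin n → ZMod 2 => ∀ i, z i = 1 → β i = 1)) hmem
  · rw [if_neg hβα]
    by_cases hle : ∀ i, β i = 1 → α i = 1
    · -- β ≤ α, β ≠ α : pairing argument
      have : ∃ i0, α i0 = 1 ∧ β i0 ≠ 1 := by
        by_contra hc
        push_neg at hc
        exact hβα (fun_ext_of hc hle).symm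
      obtain ⟨i0, hα1, hβ0⟩ := this
      refine Finset.sum_involution
        (fun z _ => Function.update z i0 (z i0 + 1)) ?_ ?_ ?_ ?_
      · intro z hz
        have : mon β (Function.update z i0 (z i0 + 1)) = mon β z := by
          apply Finset.prod_congr rfl
          intro i hi
          simp only [mem_filter, mem_univ, true_and] at hi
          exact Function.update_of_ne (fun h => hβ0 (by rw [← h]; exact hi)) _ _
        rw [this]; exact zmod2_add_self _
      · intro z hz _
        intro h
        have h2 := congrFun h i0
        rw [Function.update_self] at h2
        exact zmod2_add_one_ne _ h2
      · intro z hz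
        simp only [mem_filter, mem_univ, true_and] at hz ⊢
        intro i hi
        by_cases h : i = i0
        · rw [h]; exact hα1
        · rw [Function.update_of_ne h] at hi; exact hz i hi
      · intro z hz
        funext i
        by_cases h : i = i0
        · subst h
          rw [Function.update_self, Function.update_self, zmod2_aoo]
        · rw [Function.update_of_ne h, Function.update_of_ne h]
    · push_neg at hle
      obtain ⟨i0, hβ1, hα0⟩ := hle
      apply Finset.sum_eq_zero
      intro z hz
      simp only [mem_filter, mem_univ, true_and] at hz
      exact mon_eq_zero i0 hβ1 (fun h => hα0 (hz i0 h))


lemma anf_sum_eq {ι : Type*} (s : Finset ι) (c : ι → ZMod 2) (m : ι → BF n)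
    (α : Fin n → ZMod 2) :
    anf (fun x => ∑ β ∈ s, c β * m β x) α = ∑ β ∈ s, c β * anf (m β) α := by
  unfold anf
  rw [Finset.sum_comm]
  exact Finset.sum_congr rfl fun β _ => (Finset.mul_sum _ _ _).symm

lemma exists_annih (h : BF n) (d : ℕ)
    (hcard : (Finset.univ.filter fun x => h x = 1).card <
      (Finset.univ.filter fun α : Fin n → ZMod 2 => wtv α ≤ d).card) :
    ∃ g : BF n, g ≠ 0 ∧ degBF g ≤ d ∧ ∀ x, g x * h x = 0 := by
  classical
  set A := Finset.univ.filter fun α : Fin n → ZMod 2 => wtv α ≤ d with hA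
  set S := Finset.univ.filter fun x : Fin n → ZMod 2 => h x = 1 with hS
  set Φ : ({x // x ∈ A} → ZMod 2) → ({x // x ∈ S} → ZMod 2) :=
    fun c s => ∑ β ∈ A.attach, c β * mon β.val s.val with hΦ
  have hcards : Fintype.card ({x // x ∈ S} → ZMod 2) <
      Fintype.card ({x // x ∈ A} → ZMod 2) := by
    rw [Fintype.card_fun, Fintype.card_fun, Fintype.card_coe, Fintype.card_coe]
    exact Nat.pow_lt_pow_right (by norm_num [ZMod.card]) hcard
  obtain ⟨c1, c2, hne, heq⟩ := Fintype.exists_ne_map_eq_of_card_lt Φ hcards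
  set c : {x // x ∈ A} → ZMod 2 := fun β => c1 β - c2 β with hc
  have hcne : ∃ β, c β ≠ 0 := by
    by_contra hcc
    push_neg at hcc
    apply hne
    funext β
    have := hcc β
    rw [hc] at this
    simp only [sub_eq_zero] at this
    exact this
  set g : BF n := fun x => ∑ β ∈ A.attach, c β * mon β.val x with hg
  have hΦc : ∀ s : {x // x ∈ S}, Φ c s = 0 := by
    intro s
    have : Φ c s = Φ c1 s - Φ c2 s := by
      simp only [hΦ, hc, sub_mul, Finset.sum_sub_distrib]
    rw [this, heq, sub_self]
  have hganf : ∀ α, anf g α = if hα : α ∈ A then c ⟨α, hα⟩ else 0 := by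
    intro α
    rw [hg, anf_sum_eq]
    have : ∀ β ∈ A.attach, c β * anf (mon β.val) α
        = if β.val = α then c β else 0 := by
      intro β _
      rw [anf_mon]
      by_cases hh : β.val = α
      · rw [if_pos hh, if_pos hh, mul_one]
      · rw [if_neg hh, if_neg hh, mul_zero]
    rw [Finset.sum_congr rfl this]
    by_cases hα : α ∈ A
    · rw [dif_pos hα, Finset.sum_eq_single (⟨α, hα⟩ : {x // x ∈ A})]
      · rw [if_pos rfl]
      · intro b _ hbne
        rw [if_neg (fun hb => hbne (Subtype.ext hb))]
      · intro habs
        exact absurd (Finset.mem_attach _ _) habs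
    · rw [dif_neg hα]
      apply Finset.sum_eq_zero
      intro b _
      rw [if_neg]
      intro hb
      rw [← hb] at hα
      exact hα b.prop
  refine ⟨g, ?_, ?_, ?_⟩
  · obtain ⟨β, hβ⟩ := hcne
    intro h0
    have h1 : anf g β.val = 0 := by
      rw [h0]
      unfold anf
      simp
    rw [hganf, dif_pos β.prop] at h1
    rw [Subtype.coe_eta] at h1
    exact hβ h1
  · apply Finset.sup_le
    intro α hα
    simp only [Finset.mem_filter, Finset.mem_univ, true_and] at hα
    rw [hganf] at hα
    by_cases hmem : α ∈ A
    · have := Finset.mem_filter.mp hmem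
      exact this.2
    · rw [dif_neg hmem] at hα
      exact absurd rfl hα
  · intro x
    rcases zmod2_cases (h x) with h0 | h1
    · rw [h0, mul_zero]
    · have hx : x ∈ S := by simp [hS, h1]
      have : g x = 0 := by
        have := hΦc ⟨x, hx⟩
        rw [hΦ] at this
        exact this
      rw [this, zero_mul]


lemma card_filter_val_lt {n : ℕ} (d : ℕ) (hd : d ≤ n) :
    (Finset.univ.filter fun i : Fin n => (i : ℕ) < d).card = d := by
  have : (Finset.univ.filter fun i : Fin n => (i : ℕ) < d)
      = Finset.map (Fin.castLEEmb hd) Finset.univ := by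
    ext i
    simp only [Finset.mem_filter, Finset.mem_univ, true_and, Finset.mem_map]
    constructor
    · intro h
      exact ⟨⟨(i : ℕ), h⟩, by ext; simp [Fin.castLEEmb, Fin.castLE]⟩
    · rintro ⟨j, rfl⟩
      simp [Fin.castLEEmb, Fin.castLE]
  rw [this, Finset.card_map, Finset.card_univ, Fintype.card_fin]

lemma card_big (n : ℕ) :
    2 ^ n < 2 * (Finset.univ.filter fun α : Fin n → ZMod 2 => wtv α ≤ (n+1)/2).card := by
  classical
  set d := (n+1)/2 with hd
  set A := Finset.univ.filter fun α : Fin n → ZMod 2 => wtv α ≤ d with hA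
  have htot : A.card
      + (Finset.univ.filter fun α : Fin n → ZMod 2 => ¬ wtv α ≤ d).card = 2 ^ n := by
    rw [hA, Finset.card_filter_add_card_filter_not, Finset.card_univ,
      Fintype.card_fun, ZMod.card, Fintype.card_fin]
  have hlt : (Finset.univ.filter fun α : Fin n → ZMod 2 => ¬ wtv α ≤ d).card < A.card := by
    rcases Nat.eq_zero_or_pos n with hn | hn
    · subst hn
      have h1 : (Finset.univ.filter fun α : Fin 0 → ZMod 2 => ¬ wtv α ≤ d).card = 0 := by
        rw [Finset.card_eq_zero]
        apply Finset.filter_false_of_mem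
        intro α _
        have : wtv α = 0 := by
          simp only [wtv]
          rw [Finset.card_eq_zero]
          apply Finset.eq_empty_of_forall_notMem
          intro i
          exact absurd i.isLt (by omega)
        omega
      rw [h1] at htot ⊢
      omega
    · have hdn : d ≤ n := by omega
      set β₀ : Fin n → ZMod 2 := fun i => if (i : ℕ) < d then 1 else 0 with hβ₀
      have hwβ₀ : wtv β₀ = d := by
        have hcongr : ∀ i ∈ Finset.univ, (β₀ i = 1 ↔ (i : ℕ) < d) := by
          intro i _
          by_cases h : (i : ℕ) < d <;> simp [hβ₀, h]
        simp only [wtv]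
        rw [Finset.filter_congr hcongr, card_filter_val_lt d hdn]
      have hβ₀A : β₀ ∈ A := by
        rw [hA, Finset.mem_filter]
        exact ⟨Finset.mem_univ _, by omega⟩
      have hwle : ∀ α : Fin n → ZMod 2, wtv α ≤ n := by
        intro α
        simp only [wtv]
        calc (Finset.univ.filter fun i => α i = 1).card ≤ Finset.univ.card :=
              Finset.card_filter_le _ _
          _ = n := by rw [Finset.card_univ, Fintype.card_fin]
      have hwcompl : ∀ α : Fin n → ZMod 2, wtv (fun i => 1 + α i) = n - wtv α := by
        intro α
        have h1 : ∀ i, ((1 : ZMod 2) + α i = 1) ↔ ¬ (α i = 1) := by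
          intro i
          rcases zmod2_cases (α i) with h | h <;> rw [h] <;> decide
        have h2 : (Finset.univ.filter fun i : Fin n => α i = 1).card
            + (Finset.univ.filter fun i : Fin n => ¬ α i = 1).card = n := by
          rw [Finset.card_filter_add_card_filter_not, Finset.card_univ,
            Fintype.card_fin]
        simp only [wtv]
        rw [Finset.filter_congr fun i _ => h1 i]
        omega
      have hinj : (Finset.univ.filter fun α : Fin n → ZMod 2 => ¬ wtv α ≤ d).card
          ≤ (A.erase β₀).card := by
        apply Finset.card_le_card_of_injOn (fun α => fun i => 1 + α i)
        · intro α hα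
          simp only [Finset.coe_filter, Finset.mem_univ, true_and, Set.mem_setOf_eq] at hα
          have hw := hwcompl α
          have hwa := hwle α
          have hlt2 : wtv (fun i => 1 + α i) < d := by
            rw [hw]; omega
          apply Finset.mem_erase.mpr
          beta_reduce
          constructor
          · intro hcontra
            rw [hcontra] at hlt2
            omega
          · rw [hA, Finset.mem_filter]
            exact ⟨Finset.mem_univ _, by omega⟩
        · intro α _ α' _ hcc
          funext i
          have := congrFun hcc i
          dsimp only at this
          exact add_left_cancel this
      have herase : (A.erase β₀).card = A.card - 1 := Finset.card_erase_of_mem hβ₀A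
      have hpos : 1 ≤ A.card := Finset.card_pos.mpr ⟨β₀, hβ₀A⟩
      omega
  omega

end AIaux

/-- Algebraic immunity: minimum degree of a nonzero annihilator of `f` or of `1 ⊕ f`. -/
noncomputable def AI {n : ℕ} (f : BF n) : ℕ :=
  sInf {d : ℕ | ∃ g : BF n, g ≠ 0 ∧ degBF g = d ∧
    ((∀ x, g x * f x = 0) ∨ (∀ x, g x * (1 + f x) = 0))}

/-- For any n-variable Boolean function f, the algebraic immunity is at most ⌈n/2⌉. -/
theorem AI_le_half {n : ℕ} (f : BF n) : AI f ≤ (n + 1) / 2 := by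
  classical
  have key := AIaux.card_big n
  have hcompl : (Finset.univ.filter fun x => f x = 1).card
      + (Finset.univ.filter fun x : Fin n → ZMod 2 => 1 + f x = 1).card = 2 ^ n := by
    have h1 : ∀ x : Fin n → ZMod 2, ((1 : ZMod 2) + f x = 1) ↔ ¬ (f x = 1) := by
      intro x
      rcases AIaux.zmod2_cases (f x) with h | h <;> rw [h] <;> decide
    rw [Finset.filter_congr fun x _ => h1 x,
      Finset.card_filter_add_card_filter_not, Finset.card_univ,
      Fintype.card_fun, ZMod.card, Fintype.card_fin]
  rcases le_total (Finset.univ.filter fun x => f x = 1).card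
      (Finset.univ.filter fun x : Fin n → ZMod 2 => 1 + f x = 1).card with hle | hle
  · obtain ⟨g, hg0, hgd, hann⟩ := AIaux.exists_annih f ((n + 1) / 2) (by omega)
    exact le_trans (Nat.sInf_le ⟨g, hg0, rfl, Or.inl hann⟩) hgd
  · obtain ⟨g, hg0, hgd, hann⟩ :=
      AIaux.exists_annih (fun x => 1 + f x) ((n + 1) / 2)
        (show (Finset.univ.filter fun x : Fin n → ZMod 2 => 1 + f x = 1).card <
          (Finset.univ.filter fun α : Fin n → ZMod 2 => wtv α ≤ (n + 1) / 2).card by omega)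
    exact le_trans (Nat.sInf_le ⟨g, hg0, rfl, Or.inr hann⟩) hgd
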